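/- Let r > 0, let φ, ψ, y ∈ ℝ, and let κ ∈ ℝ with κ² < 1/3. Then the two equations e^{iφ} r = e^{iψ} a_d(y;κ) and e^{iφ} √(r² + r⁴/2) = e^{iψ} b_d(y;κ) hold simultaneously if and only if κ = 0, r = 1/2, y = √2·artanh(1/2), and ψ − φ + π/2 ∈ 2πℤ. Consequently, the intersection of the set {(e^{iφ} r, e^{iφ}√(r² + r⁴/2)) : r > 0, φ ∈ ℝ} with the set {(e^{iψ} a_d(y;κ), e^{iψ} b_d(y;κ)) : y ∈ ℝ, κ² < 1/3, ψ ∈ ℝ} equals the circle {(e^{iφ}/2, e^{iφ}·3/(4√2)) : φ ∈ ℝ}. -/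

import Mathlib

open Filter Set

/-- The inverse hyperbolic tangent. -/
noncomputable def rArtanh (x : ℝ) : ℝ := Real.log ((1 + x) / (1 - x)) / 2

/-- The defect solution a_d(y;κ) of the σ = −1 Ginzburg–Landau system. -/
noncomputable def defectA (κ : ℝ) (y : ℝ) : ℂ :=
  ((Real.sqrt 2 * κ : ℝ) +
      Complex.I * (Real.sqrt (1 - 3 * κ ^ 2) : ℂ) *
        (Real.tanh (Real.sqrt (1 - 3 * κ ^ 2) * y / Real.sqrt 2) : ℂ)) *
    Complex.exp (Complex.I * κ * y)

/-- b_d(y;κ) = ∂_y a_d(y;κ). -/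
noncomputable def defectB (κ : ℝ) : ℝ → ℂ := deriv (defectA κ)

lemma my_tanh_lt_one (x : ℝ) : Real.tanh x < 1 := by
  rw [Real.tanh_eq_sinh_div_cosh, div_lt_one (Real.cosh_pos x)]
  nlinarith [Real.cosh_sub_sinh x, Real.exp_pos (-x)]

lemma my_neg_one_lt_tanh (x : ℝ) : -1 < Real.tanh x := by
  rw [Real.tanh_eq_sinh_div_cosh, lt_div_iff₀ (Real.cosh_pos x)]
  nlinarith [Real.sinh_add_cosh x, Real.exp_pos x]

lemma my_tanh_sq_lt_one (x : ℝ) : Real.tanh x ^ 2 < 1 := by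
  nlinarith [my_tanh_lt_one x, my_neg_one_lt_tanh x]

lemma my_hasDerivAt_tanh (x : ℝ) : HasDerivAt Real.tanh (1 - Real.tanh x ^ 2) x := by
  have h := (Real.hasDerivAt_sinh x).div (Real.hasDerivAt_cosh x) (Real.cosh_pos x).ne'
  have hfun : (Real.sinh / Real.cosh) = Real.tanh := by
    funext y; rw [Pi.div_apply, Real.tanh_eq_sinh_div_cosh]
  rw [hfun] at h
  refine h.congr_deriv ?_; symm
  have hc := (Real.cosh_pos x).ne'
  rw [Real.tanh_eq_sinh_div_cosh]
  field_simp

lemma my_tanh_eq_half_iff (t : ℝ) : Real.tanh t = 1 / 2 ↔ t = rArtanh (1 / 2) := by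
  have hra : rArtanh (1 / 2) = Real.log 3 / 2 := by
    unfold rArtanh; norm_num
  have hu : Real.exp t > 0 := Real.exp_pos t
  have htanh : Real.tanh t = (Real.exp t ^ 2 - 1) / (Real.exp t ^ 2 + 1) := by
    rw [Real.tanh_eq_sinh_div_cosh, Real.sinh_eq, Real.cosh_eq, Real.exp_neg]
    field_simp
  constructor
  · intro h
    rw [htanh, div_eq_div_iff (by positivity) (by norm_num)] at h
    have h3 : Real.exp t ^ 2 = 3 := by nlinarith
    have he : Real.exp (2 * t) = 3 := by
      rw [two_mul, Real.exp_add]; nlinarith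
    have hl := congrArg Real.log he
    rw [Real.log_exp] at hl
    rw [hra]; linarith
  · intro h
    rw [htanh]
    have h3 : Real.exp t ^ 2 = 3 := by
      rw [sq, ← Real.exp_add, h, hra]
      rw [show Real.log 3 / 2 + Real.log 3 / 2 = Real.log 3 by ring]
      rw [Real.exp_log (by norm_num)]
    rw [h3]; norm_num

lemma defectB_eq (κ y : ℝ) :
    defectB κ y =
      (((Real.sqrt (1 - 3 * κ ^ 2) ^ 2 *
            (1 - Real.tanh (Real.sqrt (1 - 3 * κ ^ 2) * y / Real.sqrt 2) ^ 2) /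
              Real.sqrt 2 : ℝ) : ℂ) * Complex.I +
        ((Real.sqrt 2 * κ : ℝ) +
            Complex.I * (Real.sqrt (1 - 3 * κ ^ 2) : ℂ) *
              (Real.tanh (Real.sqrt (1 - 3 * κ ^ 2) * y / Real.sqrt 2) : ℂ)) *
          (Complex.I * κ)) * Complex.exp (Complex.I * κ * y) := by
  set α := Real.sqrt (1 - 3 * κ ^ 2) with hα
  set T := Real.tanh (α * y / Real.sqrt 2) with hT
  have hs2 : Real.sqrt 2 ≠ 0 := by positivity
  have hinner : HasDerivAt (fun z : ℝ => α * z / Real.sqrt 2) (α / Real.sqrt 2) y := by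
    simpa using ((hasDerivAt_id y).const_mul α).div_const (Real.sqrt 2)
  have htanh : HasDerivAt (fun z : ℝ => Real.tanh (α * z / Real.sqrt 2))
      ((1 - T ^ 2) * (α / Real.sqrt 2)) y :=
    by have := (my_hasDerivAt_tanh (α * y / Real.sqrt 2)).comp y hinner; exact this
  have hP : HasDerivAt
      (fun z : ℝ => ((Real.sqrt 2 * κ : ℝ) : ℂ) +
        Complex.I * (α : ℂ) * ((Real.tanh (α * z / Real.sqrt 2) : ℝ) : ℂ))
      (Complex.I * (α : ℂ) * (((1 - T ^ 2) * (α / Real.sqrt 2) : ℝ) : ℂ)) y :=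
    ((htanh.ofReal_comp).const_mul (Complex.I * (α : ℂ))).const_add _
  have hid : HasDerivAt (fun z : ℝ => ((z : ℝ) : ℂ)) 1 y := by
    simpa using (hasDerivAt_id y).ofReal_comp
  have hE : HasDerivAt (fun z : ℝ => Complex.exp (Complex.I * κ * z))
      (Complex.exp (Complex.I * κ * y) * (Complex.I * κ)) y := by
    have h1 : HasDerivAt (fun z : ℝ => Complex.I * (κ : ℂ) * ((z : ℝ) : ℂ))
        (Complex.I * κ) y := by simpa using hid.const_mul (Complex.I * (κ : ℂ))
    simpa using h1.cexp
  have hAB := hP.mul hE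
  have hfun : (fun z : ℝ => (((Real.sqrt 2 * κ : ℝ) : ℂ) +
        Complex.I * (α : ℂ) * ((Real.tanh (α * z / Real.sqrt 2) : ℝ) : ℂ)) *
        Complex.exp (Complex.I * κ * z)) = defectA κ := by
    funext z; simp [defectA, hα]
  have hfun' : ((fun z : ℝ => ((Real.sqrt 2 * κ : ℝ) : ℂ) +
        Complex.I * (α : ℂ) * ((Real.tanh (α * z / Real.sqrt 2) : ℝ) : ℂ)) *
        fun z : ℝ => Complex.exp (Complex.I * κ * z)) = defectA κ := hfun
  rw [hfun'] at hAB
  rw [defectB, hAB.deriv]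
  simp only [Complex.ofReal_mul, Complex.ofReal_div, Complex.ofReal_sub, Complex.ofReal_one,
    Complex.ofReal_pow]
  ring

lemma defectA_zero (y : ℝ) : defectA 0 y = Complex.I * ((Real.tanh (y / Real.sqrt 2) : ℝ) : ℂ) := by
  unfold defectA
  norm_num

lemma defectB_zero (y : ℝ) : defectB 0 y =
    (((1 - Real.tanh (y / Real.sqrt 2) ^ 2) / Real.sqrt 2 : ℝ) : ℂ) * Complex.I := by
  rw [defectB_eq]
  norm_num

lemma conjE (t : ℝ) : (starRingEnd ℂ) (Complex.exp (Complex.I * t)) *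
    Complex.exp (Complex.I * t) = 1 := by
  have h : (starRingEnd ℂ) (Complex.I * (t : ℂ)) = -(Complex.I * t) := by simp
  rw [← Complex.exp_conj, h, ← Complex.exp_add, neg_add_cancel, Complex.exp_zero]

lemma absE (t : ℝ) : ‖Complex.exp (Complex.I * t)‖ = 1 := by
  rw [mul_comm]; exact Complex.norm_exp_ofReal_mul_I t

lemma exp_I_half_pi : Complex.exp (Complex.I * ((Real.pi / 2 : ℝ) : ℂ)) = Complex.I := by
  rw [mul_comm, Complex.exp_mul_I]
  simp [← Complex.ofReal_cos, ← Complex.ofReal_sin, Real.cos_pi_div_two, Real.sin_pi_div_two]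

set_option maxHeartbeats 1000000 in
lemma key (r φ ψ y κ : ℝ) (hr : 0 < r) (hκ : κ ^ 2 < 1 / 3) :
    (Complex.exp (Complex.I * φ) * (r : ℂ) = Complex.exp (Complex.I * ψ) * defectA κ y ∧
        Complex.exp (Complex.I * φ) * (Real.sqrt (r ^ 2 + r ^ 4 / 2) : ℂ)
          = Complex.exp (Complex.I * ψ) * defectB κ y)
      ↔ (κ = 0 ∧ r = 1 / 2 ∧ y = Real.sqrt 2 * rArtanh (1 / 2) ∧
          ∃ n : ℤ, ψ - φ + Real.pi / 2 = 2 * Real.pi * n) := by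
  have hs2pos : (0:ℝ) < Real.sqrt 2 := by positivity
  have hs2sq : Real.sqrt 2 ^ 2 = 2 := Real.sq_sqrt (by norm_num)
  set s : ℝ := Real.sqrt (r ^ 2 + r ^ 4 / 2) with hs
  have hspos : 0 < s := Real.sqrt_pos.mpr (by positivity)
  have hssq : s ^ 2 = r ^ 2 + r ^ 4 / 2 := Real.sq_sqrt (by positivity)
  constructor
  · rintro ⟨h1, h2⟩
    have hconj : (starRingEnd ℂ) (defectA κ y) * defectB κ y = ((r * s : ℝ) : ℂ) := by
      have hc1 := congrArg (starRingEnd ℂ) h1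
      simp only [map_mul, Complex.conj_ofReal] at hc1
      have hm := congrArg₂ (· * ·) hc1 h2
      rw [show (starRingEnd ℂ) (Complex.exp (Complex.I * φ)) * (r:ℂ) *
          (Complex.exp (Complex.I * φ) * (s:ℂ)) =
          ((starRingEnd ℂ) (Complex.exp (Complex.I * φ)) * Complex.exp (Complex.I * φ)) *
            ((r:ℂ) * s) by ring, conjE, one_mul] at hm
      rw [show (starRingEnd ℂ) (Complex.exp (Complex.I * ψ)) * (starRingEnd ℂ) (defectA κ y) *
          (Complex.exp (Complex.I * ψ) * defectB κ y) =
          ((starRingEnd ℂ) (Complex.exp (Complex.I * ψ)) * Complex.exp (Complex.I * ψ)) *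
            ((starRingEnd ℂ) (defectA κ y) * defectB κ y) by ring, conjE, one_mul] at hm
      rw [← hm]; push_cast; ring
    have h13 : (0:ℝ) < 1 - 3 * κ ^ 2 := by linarith
    have hα2 : Real.sqrt (1 - 3 * κ ^ 2) ^ 2 = 1 - 3 * κ ^ 2 := Real.sq_sqrt h13.le
    have him : ((starRingEnd ℂ) (defectA κ y) * defectB κ y).im = κ * (1 - κ ^ 2) := by
      rw [defectA, defectB_eq]
      set α := Real.sqrt (1 - 3 * κ ^ 2)
      set T := Real.tanh (α * y / Real.sqrt 2)
      rw [show (starRingEnd ℂ)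
          ((((Real.sqrt 2 * κ : ℝ) : ℂ) + Complex.I * (α:ℝ) * (T:ℝ)) *
            Complex.exp (Complex.I * κ * y)) *
          (((((α:ℝ) ^ 2 * (1 - T ^ 2) / Real.sqrt 2 : ℝ) : ℂ) * Complex.I +
            (((Real.sqrt 2 * κ : ℝ):ℂ) + Complex.I * (α:ℝ) * (T:ℝ)) * (Complex.I * κ)) *
            Complex.exp (Complex.I * κ * y)) =
          ((starRingEnd ℂ) ((((Real.sqrt 2 * κ : ℝ):ℂ) + Complex.I * (α:ℝ) * (T:ℝ))) *
            ((((α ^ 2 * (1 - T ^ 2) / Real.sqrt 2 : ℝ) : ℂ)) * Complex.I +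
            ((((Real.sqrt 2 * κ : ℝ)):ℂ) + Complex.I * (α:ℝ) * (T:ℝ)) * (Complex.I * κ))) *
          ((starRingEnd ℂ) (Complex.exp (Complex.I * κ * y)) *
            Complex.exp (Complex.I * κ * y)) by rw [map_mul]; ring]
      have hEE : (starRingEnd ℂ) (Complex.exp (Complex.I * κ * y)) *
          Complex.exp (Complex.I * κ * y) = 1 := by
        have h : (starRingEnd ℂ) (Complex.I * (κ:ℂ) * (y:ℂ)) = -(Complex.I * κ * y) := by simp
        rw [← Complex.exp_conj, h, ← Complex.exp_add, neg_add_cancel, Complex.exp_zero]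
      rw [hEE, mul_one]
      simp only [map_add, map_mul, Complex.conj_ofReal, Complex.conj_I]
      simp only [Complex.add_im, Complex.add_re, Complex.mul_im, Complex.mul_re,
        Complex.ofReal_re, Complex.ofReal_im, Complex.I_re, Complex.I_im, Complex.neg_re,
        Complex.neg_im]
      field_simp
      linear_combination (Real.sqrt 2 * κ) * hα2 + (Real.sqrt 2 * κ ^ 3) * hs2sq
    have hκ0 : κ = 0 := by
      have h0 : κ * (1 - κ ^ 2) = 0 := by
        rw [← him, hconj]; simp
      have hpos : 1 - κ ^ 2 > 0 := by nlinarith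
      rcases mul_eq_zero.mp h0 with h | h
      · exact h
      · linarith
    subst hκ0
    rw [defectA_zero] at h1
    rw [defectB_zero] at h2
    set T := Real.tanh (y / Real.sqrt 2) with hT
    have hT2 : T ^ 2 < 1 := my_tanh_sq_lt_one _
    have hTpos : (0:ℝ) < (1 - T ^ 2) / Real.sqrt 2 := div_pos (by nlinarith) hs2pos
    have habs1 : r = |T| := by
      have h := congrArg (‖·‖) h1
      simp only [norm_mul, absE, one_mul, Complex.norm_I, mul_one, Complex.norm_real, Real.norm_eq_abs] at h
      rwa [abs_of_pos hr] at h
    have habs2 : s = (1 - T ^ 2) / Real.sqrt 2 := by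
      have h := congrArg (‖·‖) h2
      simp only [norm_mul, absE, one_mul, Complex.norm_I, mul_one, Complex.norm_real, Real.norm_eq_abs] at h
      rwa [abs_of_pos hspos, abs_of_pos hTpos] at h
    have hr2T : r ^ 2 = T ^ 2 := by rw [habs1, sq_abs]
    have hrhalf : r = 1 / 2 := by
      have h4 : r ^ 2 = 1 / 4 := by
        have h5 : s ^ 2 = (1 - r ^ 2) ^ 2 / 2 := by
          rw [habs2, div_pow, hs2sq, hr2T]
        nlinarith [hssq]
      have h6 : (r - 1 / 2) * (r + 1 / 2) = 0 := by linear_combination h4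
      rcases mul_eq_zero.mp h6 with h | h
      · linarith
      · linarith
    have hsne : ((s : ℝ) : ℂ) ≠ 0 := Complex.ofReal_ne_zero.mpr hspos.ne'
    have hphase : Complex.exp (Complex.I * φ) = Complex.exp (Complex.I * ψ) * Complex.I := by
      have h2' : Complex.exp (Complex.I * φ) * (s : ℂ) =
          (Complex.exp (Complex.I * ψ) * Complex.I) * (s : ℂ) := by
        rw [h2, habs2]; ring
      exact mul_right_cancel₀ hsne h2'
    have hne : Complex.exp (Complex.I * (ψ:ℂ)) * Complex.I ≠ 0 :=
      mul_ne_zero (Complex.exp_ne_zero _) Complex.I_ne_zero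
    have hTr : (r : ℂ) = (T : ℂ) := by
      have h1' : (Complex.exp (Complex.I * ψ) * Complex.I) * (r:ℂ) =
          (Complex.exp (Complex.I * ψ) * Complex.I) * (T:ℂ) := by
        calc (Complex.exp (Complex.I * ψ) * Complex.I) * (r:ℂ)
            = Complex.exp (Complex.I * φ) * (r:ℂ) := by rw [hphase]
          _ = Complex.exp (Complex.I * ψ) * (Complex.I * (T:ℂ)) := h1
          _ = (Complex.exp (Complex.I * ψ) * Complex.I) * (T:ℂ) := by ring
      exact mul_left_cancel₀ hne h1'
    have hTval : T = 1 / 2 := by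
      have hrT : r = T := by exact_mod_cast hTr
      rw [← hrT, hrhalf]
    have hyval : y = Real.sqrt 2 * rArtanh (1 / 2) := by
      have h := (my_tanh_eq_half_iff (y / Real.sqrt 2)).mp hTval
      field_simp at h
      linarith
    refine ⟨rfl, hrhalf, hyval, ?_⟩
    rw [show Complex.exp (Complex.I * (ψ:ℂ)) * Complex.I =
        Complex.exp (Complex.I * (ψ:ℂ) + Complex.I * ((Real.pi / 2 : ℝ) : ℂ)) by
      rw [Complex.exp_add, exp_I_half_pi]] at hphase
    rw [Complex.exp_eq_exp_iff_exists_int] at hphase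
    obtain ⟨n, hn⟩ := hphase
    have him2 := congrArg Complex.im hn
    simp only [Complex.add_im, Complex.mul_im, Complex.I_re, Complex.I_im, Complex.ofReal_re,
      Complex.ofReal_im, Complex.intCast_im, Complex.intCast_re, Complex.re_ofNat,
      Complex.im_ofNat] at him2
    simp at him2
    refine ⟨-n, ?_⟩
    push_cast
    linear_combination -him2
  · rintro ⟨rfl, rfl, rfl, n, hn⟩
    have harg : Real.sqrt 2 * rArtanh (1 / 2) / Real.sqrt 2 = rArtanh (1 / 2) := by
      rw [mul_comm, mul_div_assoc, div_self hs2pos.ne', mul_one]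
    have hTval : Real.tanh (Real.sqrt 2 * rArtanh (1 / 2) / Real.sqrt 2) = 1 / 2 := by
      rw [harg]; exact (my_tanh_eq_half_iff _).mpr rfl
    have ha0 : defectA 0 (Real.sqrt 2 * rArtanh (1 / 2)) =
        Complex.I * ((1/2 : ℝ) : ℂ) := by
      rw [defectA_zero, hTval]
    have hb0 : defectB 0 (Real.sqrt 2 * rArtanh (1 / 2)) =
        ((((3:ℝ)/4 / Real.sqrt 2 : ℝ)) : ℂ) * Complex.I := by
      rw [defectB_zero, hTval]
      norm_num
    have h932 : ((3:ℝ)/4/Real.sqrt 2) ^ 2 = (1/2:ℝ) ^ 2 + (1/2:ℝ) ^ 4 / 2 := by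
      rw [div_pow, hs2sq]; norm_num
    have hsval : s = (3:ℝ)/4/Real.sqrt 2 := by
      rw [hs, ← h932, Real.sqrt_sq (by positivity)]
    have hC : ((ψ:ℂ) - φ + (Real.pi:ℂ)/2) = 2*(Real.pi:ℂ)*(n:ℂ) := by
      exact_mod_cast congrArg (Complex.ofReal) hn
    have hphase : Complex.exp (Complex.I * ψ) * Complex.I = Complex.exp (Complex.I * φ) := by
      calc Complex.exp (Complex.I * (ψ:ℂ)) * Complex.I
          = Complex.exp (Complex.I * (ψ:ℂ) + Complex.I * ((Real.pi / 2 : ℝ) : ℂ)) := by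
            rw [Complex.exp_add, exp_I_half_pi]
        _ = Complex.exp (Complex.I * (φ:ℂ) + (n:ℂ) * (2 * Real.pi * Complex.I)) := by
            congr 1
            push_cast
            linear_combination Complex.I * hC
        _ = Complex.exp (Complex.I * (φ:ℂ)) := by
            rw [Complex.exp_add, Complex.exp_int_mul_two_pi_mul_I, mul_one]
    constructor
    · rw [ha0, show Complex.exp (Complex.I * ψ) * (Complex.I * ((1/2 : ℝ) : ℂ)) =
        (Complex.exp (Complex.I * ψ) * Complex.I) * ((1/2 : ℝ) : ℂ) by ring, hphase]
    · rw [hb0, hsval, show Complex.exp (Complex.I * ψ) *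
        ((((3:ℝ)/4 / Real.sqrt 2 : ℝ) : ℂ) * Complex.I) =
        (Complex.exp (Complex.I * ψ) * Complex.I) * ((((3:ℝ)/4 / Real.sqrt 2 : ℝ)) : ℂ) by ring,
        hphase]

lemma sqrt_932 : Real.sqrt ((1/2:ℝ) ^ 2 + (1/2:ℝ) ^ 4 / 2) = 3/4/Real.sqrt 2 := by
  have hs2sq : Real.sqrt 2 ^ 2 = 2 := Real.sq_sqrt (by norm_num)
  have h932 : ((3:ℝ)/4/Real.sqrt 2) ^ 2 = (1/2:ℝ) ^ 2 + (1/2:ℝ) ^ 4 / 2 := by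
    rw [div_pow, hs2sq]; norm_num
  rw [← h932, Real.sqrt_sq (by positivity)]

/-- **The intersection of the unstable manifold of the origin with the strong
stable foliation of the periodic orbits (ε = 0).**
The equations e^{iφ}r = e^{iψ}a_d(y;κ), e^{iφ}√(r²+r⁴/2) = e^{iψ}b_d(y;κ) hold
iff κ = 0, r = 1/2, y = √2·artanh(1/2) and ψ − φ + π/2 ∈ 2πℤ; consequently the
two manifolds intersect exactly in the circle {(e^{iφ}/2, e^{iφ}·3/(4√2))}. -/
theorem epsilon_zero_intersection
    (r φ ψ y κ : ℝ) (hr : 0 < r) (hκ : κ ^ 2 < 1 / 3) :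
    ((Complex.exp (Complex.I * φ) * (r : ℂ) = Complex.exp (Complex.I * ψ) * defectA κ y ∧
        Complex.exp (Complex.I * φ) * (Real.sqrt (r ^ 2 + r ^ 4 / 2) : ℂ)
          = Complex.exp (Complex.I * ψ) * defectB κ y)
      ↔ (κ = 0 ∧ r = 1 / 2 ∧ y = Real.sqrt 2 * rArtanh (1 / 2) ∧
          ∃ n : ℤ, ψ - φ + Real.pi / 2 = 2 * Real.pi * n))
    ∧
    ({p : ℂ × ℂ | ∃ r' : ℝ, 0 < r' ∧ ∃ φ' : ℝ,
          p = (Complex.exp (Complex.I * φ') * (r' : ℂ),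
               Complex.exp (Complex.I * φ') * (Real.sqrt (r' ^ 2 + r' ^ 4 / 2) : ℂ))}
        ∩ {p : ℂ × ℂ | ∃ y' κ' ψ' : ℝ, κ' ^ 2 < 1 / 3 ∧
          p = (Complex.exp (Complex.I * ψ') * defectA κ' y',
               Complex.exp (Complex.I * ψ') * defectB κ' y')}
      = {p : ℂ × ℂ | ∃ φ' : ℝ,
          p = (Complex.exp (Complex.I * φ') / 2,
               Complex.exp (Complex.I * φ') * 3 / (4 * (Real.sqrt 2 : ℂ)))}) := by
  refine ⟨key r φ ψ y κ hr hκ, ?_⟩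
  ext p
  simp only [Set.mem_inter_iff, Set.mem_setOf_eq]
  constructor
  · rintro ⟨⟨r', hr', φ', rfl⟩, y', κ', ψ', hκ', hp⟩
    rw [Prod.mk.injEq] at hp
    obtain ⟨h1, h2⟩ := hp
    obtain ⟨hκ0, hrh, -, -⟩ := (key r' φ' ψ' y' κ' hr' hκ').mp ⟨h1, h2⟩
    subst hrh
    refine ⟨φ', ?_⟩
    rw [Prod.mk.injEq]
    constructor
    · push_cast; ring
    · rw [sqrt_932]; push_cast; ring
  · rintro ⟨φ', rfl⟩
    have hk := (key (1/2) φ' (φ' - Real.pi/2) (Real.sqrt 2 * rArtanh (1/2)) 0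
      (by norm_num) (by norm_num)).mpr ⟨rfl, rfl, rfl, 0, by push_cast; ring⟩
    obtain ⟨h1, h2⟩ := hk
    constructor
    · refine ⟨1/2, by norm_num, φ', ?_⟩
      rw [Prod.mk.injEq]
      constructor
      · push_cast; ring
      · rw [sqrt_932]; push_cast; ring
    · refine ⟨Real.sqrt 2 * rArtanh (1/2), 0, φ' - Real.pi/2, by norm_num, ?_⟩
      rw [Prod.mk.injEq]
      constructor
      · rw [← h1]; push_cast; ring
      · rw [← h2, sqrt_932]; push_cast; ring
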